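/- For the simple Hamiltonian H(Q,P) = P²/2 + a₁ Q^{α₁} on Q > 0 with a₁ > 0 and α₁ > 2, the orbit average 𝒜(P²)(η) of P² over a level set of energy η equals η · 2α₁/(α₁+2); i.e., (∫₀^{Q₊} ϱ(Q)dQ)/(∫₀^{Q₊} ϱ(Q)^{-1}dQ) = η·2α₁/(α₁+2), where ϱ(Q) = √(2(η − a₁Q^{α₁})) and Q₊ = (η/a₁)^{1/α₁}. -/

import Mathlib

open intervalIntegral Real Set

/-- For the simple Hamiltonian `H(Q,P) = P²/2 + a₁ Q^{α₁}` on `Q > 0` with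
`a₁ > 0` and `α₁ > 2`, the orbit average of `P²` over the level set of energy
`η` equals `η · 2α₁/(α₁+2)`. -/
theorem orbit_average_Psq (a₁ α₁ η : ℝ) (ha : 0 < a₁) (hα : 2 < α₁) (hη : 0 < η) :
    (∫ Q in (0:ℝ)..((η / a₁) ^ (1/α₁)), Real.sqrt (2 * (η - a₁ * Q ^ α₁))) /
      (∫ Q in (0:ℝ)..((η / a₁) ^ (1/α₁)), (Real.sqrt (2 * (η - a₁ * Q ^ α₁)))⁻¹) =
    η * (2 * α₁ / (α₁ + 2)) := by
  have hα0 : (0:ℝ) < α₁ := by linarith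
  set b : ℝ := (η / a₁) ^ (1/α₁) with hbdef
  have hb0 : 0 < b := Real.rpow_pos_of_pos (div_pos hη ha) _
  have hbα : b ^ α₁ = η / a₁ := by
    rw [hbdef, one_div, Real.rpow_inv_rpow (div_pos hη ha).le hα0.ne']
  have hbη : a₁ * b ^ α₁ = η := by
    rw [hbα]; field_simp
  set g : ℝ → ℝ := fun Q => 2 * (η - a₁ * Q ^ α₁) with hgdef
  set ϱ : ℝ → ℝ := fun Q => Real.sqrt (g Q) with hϱdef
  set c : ℝ := 2 * a₁ * b ^ (α₁ - 1) with hcdef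
  have hc : 0 < c := by positivity
  -- lower bound for g on [0, b]
  have hglb : ∀ Q ∈ Icc (0:ℝ) b, c * (b - Q) ≤ g Q := by
    rintro Q ⟨hQ0, hQb⟩
    have hQα : Q ^ α₁ ≤ b ^ (α₁ - 1) * Q := by
      rcases eq_or_lt_of_le hQ0 with h | h
      · rw [← h, Real.zero_rpow hα0.ne', mul_zero]
      · have : Q ^ α₁ = Q ^ (α₁ - 1) * Q := by
          rw [← Real.rpow_add_one h.ne' (α₁ - 1)]; ring_nf
        rw [this]
        exact mul_le_mul_of_nonneg_right
          (Real.rpow_le_rpow hQ0 hQb (by linarith)) hQ0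
    have hbb : b ^ (α₁ - 1) * b = b ^ α₁ := by
      rw [← Real.rpow_add_one hb0.ne' (α₁ - 1)]; ring_nf
    have h1 : a₁ * Q ^ α₁ ≤ a₁ * (b ^ (α₁ - 1) * Q) :=
      mul_le_mul_of_nonneg_left hQα ha.le
    simp only [hgdef, hcdef]
    nlinarith [h1, hbb, hbη]
  have hgpos : ∀ Q ∈ Ico (0:ℝ) b, 0 < g Q := by
    rintro Q ⟨hQ0, hQb⟩
    have : Q ^ α₁ < b ^ α₁ := Real.rpow_lt_rpow hQ0 hQb hα0
    simp only [hgdef]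
    nlinarith
  have hgb : g b = 0 := by simp only [hgdef]; rw [hbη]; ring
  have hϱb : ϱ b = 0 := by simp [hϱdef, hgb]
  -- continuity
  have hgcont : Continuous g := by
    apply Continuous.mul continuous_const
    exact Continuous.sub continuous_const
      (Continuous.mul continuous_const
        (continuous_id.rpow_const fun x => Or.inr hα0.le))
  have hϱcont : Continuous ϱ := hgcont.sqrt
  -- integrability of ϱ
  have hint1 : IntervalIntegrable ϱ MeasureTheory.volume 0 b :=
    hϱcont.intervalIntegrable 0 b
  -- integrability of ϱ⁻¹
  have hint2 : IntervalIntegrable (fun Q => (ϱ Q)⁻¹) MeasureTheory.volume 0 b := by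
    have hmaj : IntervalIntegrable (fun Q => (Real.sqrt c)⁻¹ * (b - Q) ^ (-(1:ℝ)/2))
        MeasureTheory.volume 0 b := by
      have h1 : IntervalIntegrable (fun x : ℝ => x ^ (-(1:ℝ)/2))
          MeasureTheory.volume 0 b := intervalIntegrable_rpow' (by norm_num)
      have h2 := ((h1.comp_sub_left b).const_mul (Real.sqrt c)⁻¹).symm
      simpa using h2
    apply hmaj.mono_fun
    · exact (hϱcont.measurable.inv).aestronglyMeasurable
    · rw [uIoc_of_le hb0.le]
      refine (MeasureTheory.ae_restrict_iff' measurableSet_Ioc).2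
        (Filter.Eventually.of_forall ?_)
      rintro x ⟨hx0, hxb⟩
      have hbx : 0 ≤ b - x := by linarith
      have hlb : Real.sqrt c * Real.sqrt (b - x) ≤ ϱ x := by
        rw [← Real.sqrt_mul hc.le]
        exact Real.sqrt_le_sqrt (hglb x ⟨hx0.le, hxb⟩)
      have hrw : (b - x) ^ (-(1:ℝ)/2) = (Real.sqrt (b - x))⁻¹ := by
        rw [Real.sqrt_eq_rpow, ← Real.rpow_neg hbx]
        norm_num
      simp only [Real.norm_eq_abs]
      rw [abs_of_nonneg (by positivity : (0:ℝ) ≤ (ϱ x)⁻¹),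
        abs_of_nonneg (by positivity : (0:ℝ) ≤ (Real.sqrt c)⁻¹ * (b - x) ^ (-(1:ℝ)/2)),
        hrw, ← mul_inv]
      rcases eq_or_lt_of_le hxb with h | h
      · rw [h, hϱb]; simp
      · have hsx : 0 < Real.sqrt c * Real.sqrt (b - x) :=
          mul_pos (Real.sqrt_pos.2 hc) (Real.sqrt_pos.2 (by linarith))
        exact inv_anti₀ hsx hlb
  -- FTC: derivative of F Q = Q * ϱ Q
  set F : ℝ → ℝ := fun Q => Q * ϱ Q with hFdef
  set D : ℝ → ℝ := fun Q => (1 + α₁/2) * ϱ Q - (α₁ * η) * (ϱ Q)⁻¹ with hDdef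
  have hderiv : ∀ x ∈ Ioo (0:ℝ) b, HasDerivAt F (D x) x := by
    rintro x ⟨hx0, hxb⟩
    have hgx : 0 < g x := hgpos x ⟨hx0.le, hxb⟩
    have hϱx : 0 < ϱ x := Real.sqrt_pos.2 hgx
    have hgd : HasDerivAt g (2 * (-(a₁ * (α₁ * x ^ (α₁ - 1))))) x := by
      exact (((Real.hasDerivAt_rpow_const (Or.inl hx0.ne')).const_mul a₁).const_sub η).const_mul 2
    have hϱd : HasDerivAt ϱ ((2 * (-(a₁ * (α₁ * x ^ (α₁ - 1))))) / (2 * ϱ x)) x :=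
      hgd.sqrt hgx.ne'
    have hFd : HasDerivAt F _ x := (hasDerivAt_id x).mul hϱd
    convert hFd using 1
    have hxα : x ^ (α₁ - 1) * x = x ^ α₁ := by
      rw [← Real.rpow_add_one hx0.ne' (α₁ - 1)]; ring_nf
    have hsq : ϱ x ^ 2 = g x := Real.sq_sqrt hgx.le
    have hax : a₁ * x ^ α₁ = η - ϱ x ^ 2 / 2 := by
      rw [hsq]; simp only [hgdef]; ring
    have e4 : x * (2 * -(a₁ * (α₁ * x ^ (α₁ - 1))) / (2 * ϱ x))
        = -(α₁ * (a₁ * x ^ α₁)) / ϱ x := by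
      rw [← hxα]; field_simp
    simp only [hDdef, id_eq]
    rw [e4, hax]
    field_simp
    ring
  have hFcont : ContinuousOn F (Icc 0 b) :=
    (continuous_id.mul hϱcont).continuousOn
  have hDint : IntervalIntegrable D MeasureTheory.volume 0 b :=
    ((hint1.const_mul _).sub (hint2.const_mul _))
  have hFTC : ∫ x in (0:ℝ)..b, D x = 0 := by
    rw [intervalIntegral.integral_eq_sub_of_hasDerivAt_of_le hb0.le hFcont hderiv hDint]
    simp [hFdef, hϱb]
  have hgoal1 : (∫ Q in (0:ℝ)..b, Real.sqrt (2 * (η - a₁ * Q ^ α₁)))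
      = ∫ Q in (0:ℝ)..b, ϱ Q := rfl
  have hgoal2 : (∫ Q in (0:ℝ)..b, (Real.sqrt (2 * (η - a₁ * Q ^ α₁)))⁻¹)
      = ∫ Q in (0:ℝ)..b, (ϱ Q)⁻¹ := rfl
  rw [hgoal1, hgoal2]
  set I₁ : ℝ := ∫ Q in (0:ℝ)..b, ϱ Q with hI1def
  set I₂ : ℝ := ∫ Q in (0:ℝ)..b, (ϱ Q)⁻¹ with hI2def
  have hsplit : ∫ x in (0:ℝ)..b, D x = (1 + α₁/2) * I₁ - (α₁ * η) * I₂ := by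
    simp only [hDdef]
    rw [intervalIntegral.integral_sub (hint1.const_mul _) (hint2.const_mul _),
      intervalIntegral.integral_const_mul, intervalIntegral.integral_const_mul]
  have hI2pos : 0 < I₂ := by
    apply intervalIntegral_pos_of_pos_on hint2 _ hb0
    rintro x ⟨hx0, hxb⟩
    exact inv_pos.2 (Real.sqrt_pos.2 (hgpos x ⟨hx0.le, hxb⟩))
  rw [hsplit] at hFTC
  have key : (1 + α₁/2) * I₁ = (α₁ * η) * I₂ := by linarith
  have h12 : (1:ℝ) + α₁/2 ≠ 0 := by positivity
  have hne : α₁ + 2 ≠ 0 := by positivity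
  have hI1 : I₁ = (α₁ * η) * I₂ / (1 + α₁/2) := by
    rw [eq_div_iff h12]; linarith [key]
  rw [hI1, div_div, div_eq_iff (by positivity : (1 + α₁/2) * I₂ ≠ 0)]
  field_simp
  ring
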